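/- Let F be a field, A an n×n matrix over F whose characteristic polynomial factors as f = f₁·f₂ with gcd(f₁,f₂) = 1, deg f₁ = d₁, deg f₂ = d₂. Then F^n decomposes as a direct sum V₁ ⊕ V₂ of A-invariant subspaces with dim V₁ = d₁, dim V₂ = d₂, such that the characteristic polynomial of A restricted to V_i is f_i; moreover this pair of subspaces is unique (V₁ = ker f₁(A), V₂ = ker f₂(A)). -/

import Mathlib

open Polynomial

section Aux

variable {F : Type*} [Field F]

lemma myEvalCharpoly {ι : Type*} [Fintype ι] [DecidableEq ι] (B : Matrix ι ι F) (lam : F) :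
    (B.charpoly).eval lam = (lam • (1 : Matrix ι ι F) - B).det := by
  rw [Matrix.charpoly, ← Polynomial.coe_evalRingHom, RingHom.map_det]
  congr 1
  ext i j
  by_cases h : i = j
  · subst h
    simp [Matrix.charmatrix_apply_eq, Matrix.one_apply, Matrix.sub_apply]
  · simp [Matrix.charmatrix_apply_ne _ _ _ h, Matrix.one_apply_ne h, Matrix.sub_apply]

lemma myMatrixCoprime {ι : Type*} [Fintype ι] [DecidableEq ι] (B : Matrix ι ι F)
    {f g : F[X]} (hfB : aeval B f = 0) (hc : IsCoprime f g) :
    IsCoprime B.charpoly g := by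
  classical
  by_contra hcon
  set d := EuclideanDomain.gcd B.charpoly g with hd
  have hdvd1 : d ∣ B.charpoly := EuclideanDomain.gcd_dvd_left _ _
  have hdvd2 : d ∣ g := EuclideanDomain.gcd_dvd_right _ _
  have hdunit : ¬ IsUnit d := fun h => hcon (EuclideanDomain.gcd_isUnit_iff.mp h)
  have hd0 : d ≠ 0 := by
    intro h0
    rw [h0, zero_dvd_iff] at hdvd1
    exact B.charpoly_monic.ne_zero hdvd1
  have hdeg : d.degree ≠ 0 := fun h => hdunit (Polynomial.isUnit_iff_degree_eq_zero.mpr h)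
  set K := d.SplittingField
  set σ : F →+* K := algebraMap F K with hσ
  obtain ⟨lam, hlam⟩ := Polynomial.Splits.exists_eval_eq_zero
    (Polynomial.SplittingField.splits d) (by rwa [Polynomial.degree_map])
  rw [Polynomial.eval_map] at hlam
  set B' : Matrix ι ι K := B.map σ with hB'
  -- λ is a root of charpoly B'
  have hroot : (B'.charpoly).eval lam = 0 := by
    rw [hB', Matrix.charpoly_map]
    have : d.map σ ∣ B.charpoly.map σ := Polynomial.map_dvd σ hdvd1
    refine Polynomial.eval_eq_zero_of_dvd_of_eval_eq_zero this ?_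
    rw [Polynomial.eval_map]; exact hlam
  -- eigenvector
  have hdet : (lam • (1 : Matrix ι ι K) - B').det = 0 := by
    rw [← myEvalCharpoly]; exact hroot
  obtain ⟨v, hv0, hvv⟩ := (Matrix.exists_mulVec_eq_zero_iff).mpr hdet
  have heig : B'.mulVecLin v = lam • v := by
    have := hvv
    rw [Matrix.sub_mulVec, Matrix.smul_mulVec, Matrix.one_mulVec, sub_eq_zero] at this
    simpa [Matrix.mulVecLin_apply] using this.symm
  -- aeval B g is a unit
  obtain ⟨a, b, hab⟩ := hc
  have h1 : (aeval B b) * (aeval B g) = 1 := by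
    have := congrArg (aeval B) hab
    simpa [map_add, map_mul, hfB] using this
  have h2 : (aeval B g) * (aeval B b) = 1 := by
    rw [← map_mul, mul_comm g b, map_mul]; exact h1
  have hunitF : IsUnit (aeval B g) := ⟨⟨aeval B g, aeval B b, h2, h1⟩, rfl⟩
  -- transfer to K
  set ψ : Matrix ι ι F →ₐ[F] Matrix ι ι K := (Algebra.ofId F K).mapMatrix with hψ
  have hψB : ψ B = B' := rfl
  have hunitK : IsUnit (aeval B' g) := by
    rw [← hψB, Polynomial.aeval_algHom_apply]
    exact hunitF.map ψ
  have hunitK' : IsUnit (aeval B' (g.map σ)) := by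
    rwa [hσ, Polynomial.aeval_map_algebraMap]
  -- but g(λ) = 0 kills the eigenvector
  have hglam : (g.map σ).eval lam = 0 := by
    refine Polynomial.eval_eq_zero_of_dvd_of_eval_eq_zero (Polynomial.map_dvd σ hdvd2) ?_
    rw [Polynomial.eval_map]; exact hlam
  have heigvec : Module.End.HasEigenvector (B'.mulVecLin) lam v :=
    ⟨Module.End.mem_eigenspace_iff.mpr heig, hv0⟩
  have hzero : aeval (B'.mulVecLin) (g.map σ) v = 0 := by
    rw [Module.End.aeval_apply_of_hasEigenvector heigvec, hglam, zero_smul]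
  have hev : (aeval B' (g.map σ)).mulVecLin v = 0 := by
    have h3 : aeval (Matrix.toLinAlgEquiv' B') (g.map σ)
        = Matrix.toLinAlgEquiv' (aeval B' (g.map σ)) :=
      Polynomial.aeval_algHom_apply (Matrix.toLinAlgEquiv' :
        Matrix ι ι K ≃ₐ[K] _).toAlgHom B' (g.map σ)
    have h4 : aeval (B'.mulVecLin) (g.map σ) = (aeval B' (g.map σ)).mulVecLin := h3
    rw [← h4]; exact hzero
  obtain ⟨u, hu⟩ := hunitK'
  apply hv0
  have hev' : (↑u : Matrix ι ι K).mulVec v = 0 := by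
    rw [hu]; simpa [Matrix.mulVecLin_apply] using hev
  have h5 := congrArg (((u⁻¹ : (Matrix ι ι K)ˣ) : Matrix ι ι K).mulVec ·) hev'
  simp only [Matrix.mulVec_mulVec, Matrix.mulVec_zero] at h5
  rwa [Matrix.mulVec_mulVec, Units.inv_mul, Matrix.one_mulVec] at h5

lemma myEndCoprime {M : Type*} [AddCommGroup M] [Module F M] [FiniteDimensional F M]
    (T : Module.End F M) {f g : F[X]} (hfT : aeval T f = 0) (hc : IsCoprime f g) :
    IsCoprime (LinearMap.charpoly T) g := by
  classical
  let b := Module.finBasis F M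
  rw [← LinearMap.charpoly_toMatrix T b]
  have hmat : LinearMap.toMatrixAlgEquiv b T = LinearMap.toMatrix b b T := rfl
  refine myMatrixCoprime _ ?_ hc
  rw [← hmat,
    show (LinearMap.toMatrixAlgEquiv b) T = (LinearMap.toMatrixAlgEquiv b).toAlgHom T from rfl,
    Polynomial.aeval_algHom_apply, hfT, map_zero]

lemma myAevalRestrict {M : Type*} [AddCommGroup M] [Module F M]
    (T : Module.End F M) {p : Submodule F M}
    (h : ∀ x ∈ p, T x ∈ p) (q : F[X]) :
    ∀ x : p, ((aeval (T.restrict h) q) x : M) = aeval T q (x : M) := by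
  induction q using Polynomial.induction_on with
  | C a => intro x; simp [Module.algebraMap_end_apply]
  | add q r hq hr => intro x; simp [map_add, hq, hr]
  | monomial m a hm =>
    intro x
    have h6 := hm (T.restrict h x)
    rw [LinearMap.restrict_coe_apply] at h6
    have hq : C a * X ^ (m + 1) = C a * X ^ m * X := by ring
    rw [hq]
    simp only [map_mul, aeval_X, Module.End.mul_apply]
    simp only [map_mul, Module.End.mul_apply] at h6
    exact h6

lemma myCharpolyRestrictMul {M : Type*} [AddCommGroup M] [Module F M] [FiniteDimensional F M]
    (T : Module.End F M) {V W : Submodule F M} (hVW : IsCompl V W)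
    (hV : ∀ x ∈ V, T x ∈ V) (hW : ∀ x ∈ W, T x ∈ W) :
    (T.restrict hV).charpoly * (T.restrict hW).charpoly = T.charpoly := by
  let e := Submodule.prodEquivOfIsCompl V W hVW
  have hψ : (T.restrict hV).prodMap (T.restrict hW) = e.symm.conj T := by
    apply LinearMap.ext
    rintro ⟨v, w⟩
    apply e.injective
    have he : ∀ (x : V) (y : W), e (x, y) = (x : M) + (y : M) := fun x y => by
      simp [e, Submodule.coe_prodEquivOfIsCompl']
    rw [LinearEquiv.conj_apply]
    simp only [LinearMap.prodMap_apply, LinearMap.coe_comp, LinearEquiv.coe_coe,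
      Function.comp_apply, LinearEquiv.symm_symm, LinearEquiv.apply_symm_apply]
    rw [he, he, map_add, LinearMap.restrict_coe_apply, LinearMap.restrict_coe_apply]
  rw [← LinearMap.charpoly_prodMap, hψ, LinearEquiv.charpoly_conj]

end Aux

/-- The predicate: `p` is a pair of complementary `A`-invariant subspaces on which `A`
acts with characteristic polynomials `f₁` and `f₂` respectively. -/
def IsInvariantSplitting {F : Type*} [Field F] {n : ℕ} (A : Matrix (Fin n) (Fin n) F)
    (f₁ f₂ : Polynomial F)
    (p : Submodule F (Fin n → F) × Submodule F (Fin n → F)) : Prop :=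
  IsCompl p.1 p.2 ∧
  ∃ (h₁ : ∀ x ∈ p.1, A.mulVecLin x ∈ p.1) (h₂ : ∀ x ∈ p.2, A.mulVecLin x ∈ p.2),
    LinearMap.charpoly (A.mulVecLin.restrict h₁) = f₁ ∧
    LinearMap.charpoly (A.mulVecLin.restrict h₂) = f₂

/-- If the characteristic polynomial of `A` factors as `f₁·f₂` with `f₁, f₂` monic and
coprime, then `F^n` has a unique decomposition into complementary `A`-invariant
subspaces on which `A` acts with characteristic polynomials `f₁` and `f₂`; the unique
such pair is `(ker f₁(A), ker f₂(A))`. -/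
theorem stmt11 (F : Type*) [Field F] (n : ℕ) (A : Matrix (Fin n) (Fin n) F)
    (f₁ f₂ : Polynomial F) (h₁ : f₁.Monic) (h₂ : f₂.Monic)
    (hc : IsCoprime f₁ f₂) (hf : A.charpoly = f₁ * f₂) :
    (∃! p, IsInvariantSplitting A f₁ f₂ p) ∧
    IsInvariantSplitting A f₁ f₂
      (LinearMap.ker (aeval A.mulVecLin f₁), LinearMap.ker (aeval A.mulVecLin f₂)) := by
  classical
  set T := A.mulVecLin with hT
  have hchar : LinearMap.charpoly T = A.charpoly := by
    rw [← LinearMap.charpoly_toMatrix T (Pi.basisFun F (Fin n)),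
      LinearMap.toMatrix_eq_toMatrix', hT]
    congr 1
    exact LinearMap.toMatrix'_toLin' A
  have hCH : aeval T (f₁ * f₂) = 0 := by
    rw [← hf, ← hchar]; exact LinearMap.aeval_self_charpoly T
  set V₁ := LinearMap.ker (aeval T f₁) with hV₁
  set V₂ := LinearMap.ker (aeval T f₂) with hV₂
  have hcompl : IsCompl V₁ V₂ := by
    refine ⟨Polynomial.disjoint_ker_aeval_of_isCoprime T hc, codisjoint_iff.mpr ?_⟩
    rw [hV₁, hV₂, Polynomial.sup_ker_aeval_eq_ker_aeval_mul_of_coprime T hc, hCH,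
      LinearMap.ker_zero]
  have hcomm : ∀ (q : Polynomial F) (x : Fin n → F), aeval T q (T x) = T (aeval T q x) := by
    intro q x
    have hmul : aeval T q * T = T * aeval T q := by
      have ha : aeval T q * T = aeval T (q * X) := by rw [map_mul, Polynomial.aeval_X]
      have hb : T * aeval T q = aeval T (X * q) := by rw [map_mul, Polynomial.aeval_X]
      rw [ha, hb, mul_comm q X]
    calc aeval T q (T x) = (aeval T q * T) x := rfl
      _ = (T * aeval T q) x := by rw [hmul]
      _ = T (aeval T q x) := rfl
  have hi₁ : ∀ x ∈ V₁, T x ∈ V₁ := by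
    intro x hx
    rw [hV₁, LinearMap.mem_ker] at hx ⊢
    rw [hcomm, hx, map_zero]
  have hi₂ : ∀ x ∈ V₂, T x ∈ V₂ := by
    intro x hx
    rw [hV₂, LinearMap.mem_ker] at hx ⊢
    rw [hcomm, hx, map_zero]
  have hk₁ : aeval (T.restrict hi₁) f₁ = 0 := by
    apply LinearMap.ext
    intro x
    apply Subtype.ext
    rw [myAevalRestrict T hi₁ f₁ x]
    simpa using (LinearMap.mem_ker.mp x.2)
  have hk₂ : aeval (T.restrict hi₂) f₂ = 0 := by
    apply LinearMap.ext
    intro x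
    apply Subtype.ext
    rw [myAevalRestrict T hi₂ f₂ x]
    simpa using (LinearMap.mem_ker.mp x.2)
  set g₁ := LinearMap.charpoly (T.restrict hi₁) with hg₁d
  set g₂ := LinearMap.charpoly (T.restrict hi₂) with hg₂d
  have hcop₁ : IsCoprime g₁ f₂ := myEndCoprime _ hk₁ hc
  have hcop₂ : IsCoprime g₂ f₁ := myEndCoprime _ hk₂ hc.symm
  have hmul : g₁ * g₂ = f₁ * f₂ := by
    rw [hg₁d, hg₂d, myCharpolyRestrictMul T hcompl hi₁ hi₂, hchar, hf]
  have hm₁ : g₁.Monic := LinearMap.charpoly_monic _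
  have hm₂ : g₂.Monic := LinearMap.charpoly_monic _
  have hdvd₁ : g₁ ∣ f₁ := hcop₁.dvd_of_dvd_mul_right ⟨g₂, hmul.symm⟩
  have hdvd₂ : g₂ ∣ f₂ := hcop₂.dvd_of_dvd_mul_left ⟨g₁, by rw [← hmul]; ring⟩
  have hdeg : g₁.natDegree + g₂.natDegree = f₁.natDegree + f₂.natDegree := by
    rw [← Polynomial.natDegree_mul hm₁.ne_zero hm₂.ne_zero, hmul,
      Polynomial.natDegree_mul h₁.ne_zero h₂.ne_zero]
  have hle₁ : g₁.natDegree ≤ f₁.natDegree := Polynomial.natDegree_le_of_dvd hdvd₁ h₁.ne_zero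
  have hle₂ : g₂.natDegree ≤ f₂.natDegree := Polynomial.natDegree_le_of_dvd hdvd₂ h₂.ne_zero
  have heqd₁ : g₁.natDegree = f₁.natDegree := by omega
  have heqd₂ : g₂.natDegree = f₂.natDegree := by omega
  have hkey : ∀ {g f : Polynomial F}, g.Monic → f.Monic → g ∣ f →
      g.natDegree = f.natDegree → g = f := by
    intro g f hg hfm hdvd hdeq
    obtain ⟨c, hcq⟩ := hdvd
    have hc0 : c ≠ 0 := by rintro rfl; rw [mul_zero] at hcq; exact hfm.ne_zero hcq
    have hcd : c.natDegree = 0 := by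
      have := Polynomial.natDegree_mul hg.ne_zero hc0
      rw [← hcq, hdeq] at this
      omega
    have hcmon : c.Monic := hg.of_mul_monic_left (hcq ▸ hfm)
    have : c = 1 := hcmon.natDegree_eq_zero.mp hcd
    rw [hcq, this, mul_one]
  have heq₁ : g₁ = f₁ := hkey hm₁ h₁ hdvd₁ heqd₁
  have heq₂ : g₂ = f₂ := hkey hm₂ h₂ hdvd₂ heqd₂
  have hmain : IsInvariantSplitting A f₁ f₂ (V₁, V₂) :=
    ⟨hcompl, hi₁, hi₂, heq₁, heq₂⟩
  refine ⟨⟨(V₁, V₂), hmain, ?_⟩, hmain⟩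
  rintro ⟨W₁, W₂⟩ ⟨hWcompl, hw₁, hw₂, hch₁, hch₂⟩
  have hW₁le : W₁ ≤ V₁ := by
    intro x hx
    rw [hV₁, LinearMap.mem_ker]
    have hCH₁ : aeval (T.restrict hw₁) f₁ = 0 := by
      rw [← hch₁]; exact LinearMap.aeval_self_charpoly _
    have := myAevalRestrict T hw₁ f₁ ⟨x, hx⟩
    rw [hCH₁] at this
    simpa using this.symm
  have hW₂le : W₂ ≤ V₂ := by
    intro x hx
    rw [hV₂, LinearMap.mem_ker]
    have hCH₂ : aeval (T.restrict hw₂) f₂ = 0 := by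
      rw [← hch₂]; exact LinearMap.aeval_self_charpoly _
    have := myAevalRestrict T hw₂ f₂ ⟨x, hx⟩
    rw [hCH₂] at this
    simpa using this.symm
  have hkey2 : ∀ {W V W' V' : Submodule F (Fin n → F)}, IsCompl W W' → IsCompl V V' →
      W ≤ V → W' ≤ V' → W = V := by
    intro W V W' V' hcW hcV le1 le2
    refine le_antisymm le1 ?_
    have h7 : (W ⊔ W') ⊓ V = W ⊔ (W' ⊓ V) := sup_inf_assoc_of_le W' le1
    rw [hcW.sup_eq_top, top_inf_eq] at h7
    have h8 : W' ⊓ V ≤ ⊥ := by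
      rw [← hcV.inf_eq_bot]
      exact inf_le_inf le2 le_rfl |>.trans (le_of_eq (inf_comm _ _))
    rw [h7]
    exact sup_le le_rfl (h8.trans bot_le)
  have e1 : W₁ = V₁ := hkey2 hWcompl hcompl hW₁le hW₂le
  have e2 : W₂ = V₂ := hkey2 hWcompl.symm hcompl.symm hW₂le hW₁le
  rw [Prod.mk.injEq]
  exact ⟨e1, e2⟩
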